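/- Let h(x) = (x + 1 + (x+7)·√(1 - 64/(x+7)^2))/2 with the principal branch. For every x with Re(x) > 10, |h(x) - x - 4| < 1; consequently Re(h(x)) > Re(x) + 3, and for every positive integer n the iterate h^{∘n}(x) is defined, Re(h^{∘n}(x)) > Re(x) + 3n > 10. -/

import Mathlib

noncomputable def hinv (x : ℂ) : ℂ :=
  (x + 1 + (x + 7) * (1 - 64 / (x + 7) ^ 2) ^ (1 / 2 : ℂ)) / 2

lemma key (x : ℂ) (hx : 10 < x.re) : ‖hinv x - x - 4‖ < 1 := by
  set w : ℂ := x + 7 with hw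
  have hwre : 17 < w.re := by
    have : w.re = x.re + 7 := by simp [hw]
    linarith [this]
  have ha : 17 < ‖w‖ := lt_of_lt_of_le hwre (Complex.re_le_norm w)
  set a := ‖w‖ with hadef
  have ha0 : (0:ℝ) < a := by linarith
  have hw0 : w ≠ 0 := by
    intro h
    rw [hadef, h] at ha; simp at ha; linarith
  set z : ℂ := 1 - 64 / w ^ 2 with hz
  have hz1 : ‖z - 1‖ = 64 / a ^ 2 := by
    have : z - 1 = -(64 / w ^ 2) := by rw [hz]; ring
    rw [this, norm_neg, norm_div, norm_pow]
    norm_num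
    rfl
  have haz : (64:ℝ) / a ^ 2 < 1 := by
    rw [div_lt_one (by positivity)]
    nlinarith
  have hzre : 1 - 64 / a ^ 2 ≤ z.re := by
    have h1 : |(z - 1).re| ≤ ‖z - 1‖ := Complex.abs_re_le_norm _
    rw [hz1] at h1
    have h2 : (z - 1).re = z.re - 1 := by simp
    have h3 := (abs_le.mp h1).1
    linarith
  have hzre0 : 0 < z.re := by linarith
  have hz0 : z ≠ 0 := by
    intro h; rw [h] at hzre0; simp at hzre0
  set s : ℂ := z ^ (1/2 : ℂ) with hs
  have hs2 : s ^ 2 = z := by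
    rw [hs]
    have : (1/2 : ℂ) = ((2:ℕ) : ℂ)⁻¹ := by norm_num
    rw [this]
    exact Complex.cpow_nat_inv_pow z (by norm_num) -- maybe arg order differs
  have hsre0 : 0 ≤ s.re := by
    rw [hs, Complex.cpow_def_of_ne_zero hz0]
    rw [Complex.exp_re]
    have harg : |Complex.arg z| < Real.pi / 2 := by
      rw [Complex.abs_arg_lt_pi_div_two_iff]
      exact Or.inl hzre0
    have him : (Complex.log z * (1/2)).im = Complex.arg z / 2 := by
      simp [Complex.log_im]
      ring
    rw [him]
    have hc : 0 < Real.cos (Complex.arg z / 2) := by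
      apply Real.cos_pos_of_mem_Ioo
      constructor
      · have := abs_lt.mp harg
        have : -(Real.pi/2) < Complex.arg z := this.1
        linarith [Real.pi_pos]
      · have := (abs_lt.mp harg).2
        linarith [Real.pi_pos]
    positivity
  have hsq : z.re ≤ s.re ^ 2 := by
    have : z.re = s.re * s.re - s.im * s.im := by
      rw [← hs2]; rw [pow_two, Complex.mul_re]
    nlinarith [sq_nonneg s.im]
  have hkey : 32 < a * (1 + s.re) := by
    have h1 : (225:ℝ) < (a * s.re)^2 := by
      have : a^2 * z.re ≥ a^2 * (1 - 64/a^2) := by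
        apply mul_le_mul_of_nonneg_left hzre (by positivity)
      have h2 : a^2 * (1 - 64/a^2) = a^2 - 64 := by field_simp
      nlinarith [hsq]
    have h2 : 15 < a * s.re := by
      nlinarith [mul_nonneg (le_of_lt ha0) hsre0]
    nlinarith
  have hfac : ‖s - 1‖ * ‖s + 1‖ = 64 / a ^ 2 := by
    rw [← norm_mul]
    have : (s - 1) * (s + 1) = z - 1 := by rw [← hs2]; ring
    rw [this, hz1]
  have hsp1 : 1 + s.re ≤ ‖s + 1‖ := by
    have := Complex.re_le_norm (s + 1)
    simpa [add_comm] using this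
  have hgoal : a * ‖s - 1‖ < 2 := by
    have h1 : 32 < a * ‖s + 1‖ := by
      have := mul_le_mul_of_nonneg_left hsp1 (le_of_lt ha0)
      linarith
    have h2 : a * ‖s - 1‖ * (a * ‖s + 1‖) = 64 := by
      have he : a * ‖s - 1‖ * (a * ‖s + 1‖)
          = a ^ 2 * (‖s - 1‖ * ‖s + 1‖) := by ring
      rw [he, hfac]; field_simp
    nlinarith [h2, h1, norm_nonneg (s - 1), norm_nonneg (s + 1)]
  have heq : hinv x - x - 4 = w * (s - 1) / 2 := by
    rw [hinv, hs, hz, hw]; ring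
  rw [heq]
  rw [norm_div, norm_mul]
  simp only [Complex.norm_two]
  rw [div_lt_one (by norm_num)]
  calc ‖w‖ * ‖s - 1‖ = a * ‖s - 1‖ := rfl
    _ < 2 := hgoal

lemma key2 (x : ℂ) (hx : 10 < x.re) : x.re + 3 < (hinv x).re := by
  have h := key x hx
  have h2 := (abs_le.mp (Complex.abs_re_le_norm (hinv x - x - 4))).1
  have h3 : (hinv x - x - 4).re = (hinv x).re - x.re - 4 := by simp
  linarith

theorem stmt13 (x : ℂ) (hx : 10 < x.re) :
    ‖hinv x - x - 4‖ < 1 ∧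
    x.re + 3 < (hinv x).re ∧
    ∀ n : ℕ, 0 < n →
      x.re + 3 * n < (hinv^[n] x).re ∧ 10 < (hinv^[n] x).re := by
  refine ⟨key x hx, key2 x hx, ?_⟩
  intro n hn
  induction n with
  | zero => exact absurd hn (by simp)
  | succ m ih =>
    rcases Nat.eq_zero_or_pos m with hm | hm
    · subst hm
      have h0 : hinv^[0 + 1] x = hinv x := Function.iterate_one hinv ▸ rfl
      rw [h0]
      have := key2 x hx
      push_cast
      constructor <;> linarith
    · obtain ⟨h1, h2⟩ := ih hm
      have hstep : hinv^[m + 1] x = hinv (hinv^[m] x) :=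
        Function.iterate_succ_apply' hinv m x
      have h3 := key2 (hinv^[m] x) h2
      rw [hstep]
      push_cast
      constructor <;> linarith
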